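/- Let n ≥ 1, let l_1,…,l_n, θ_1,…,θ_n, L be real numbers, let f_1,…,f_n be invertible 2×2 real matrices satisfying f_i⁻¹ D f_i = A(l_i, θ_i) for each i, and define T : ℝ → ℝ by T(z) = Tr( (f_1⁻¹ S(z) f_1)⋯(f_n⁻¹ S(z) f_n)·γ_L ). Then the second derivative of T at 0 equals Σ_{1 ≤ i < j ≤ n} ( cos θ_i cos θ_j cosh(L/2) + sin θ_i sin θ_j cosh(L/2 − (l_j − l_i)) ) + n·cosh(L/2)/2. -/

import Mathlib

open Finset

/-- The matrix `A(l,θ) = [[cos θ, −e^l sin θ], [−e^{−l} sin θ, −cos θ]]`. -/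
noncomputable def Amat (l θ : ℝ) : Matrix (Fin 2) (Fin 2) ℝ :=
  !![Real.cos θ, -Real.exp l * Real.sin θ; -Real.exp (-l) * Real.sin θ, -Real.cos θ]

/-- The matrix `γ_L = diag(e^{L/2}, e^{−L/2})`. -/
noncomputable def gammaMat (L : ℝ) : Matrix (Fin 2) (Fin 2) ℝ :=
  !![Real.exp (L / 2), 0; 0, Real.exp (-(L / 2))]

/-- The matrix `S(z) = diag(e^{z/2}, e^{−z/2})`. -/
noncomputable def Smat (z : ℝ) : Matrix (Fin 2) (Fin 2) ℝ :=
  !![Real.exp (z / 2), 0; 0, Real.exp (-(z / 2))]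

/-- The matrix `D = diag(1, −1)`. -/
def Dmat : Matrix (Fin 2) (Fin 2) ℝ := !![1, 0; 0, -1]

/-- Alternating length `L_I = Σ_{j=1}^k (−1)^j l_{i_j}` for `I = {i_1 < ⋯ < i_k}`. -/
def altLen {r : ℕ} (l : Fin r → ℝ) (I : Finset (Fin r)) : ℝ :=
  let s := (I.sort (· ≤ ·)).map l
  ∑ j ∈ Finset.range s.length, (-1 : ℝ) ^ (j + 1) * s.getD j 0

/-- Signature `s(I) = (i_2−i_1+1) + (i_4−i_3+1) + ⋯ + (i_k−i_{k−1}+1)` for `I` of even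
cardinality, with `s(∅) = 0`. -/
def sig {r : ℕ} (I : Finset (Fin r)) : ℕ :=
  let s := (I.sort (· ≤ ·)).map Fin.val
  ∑ m ∈ Finset.range (s.length / 2), (s.getD (2 * m + 1) 0 - s.getD (2 * m) 0 + 1)

/-- `P(k,n)`: the set of `n`-tuples of nonnegative integers summing to `k`. -/
def Pkn (k n : ℕ) : Finset (Fin n → ℕ) := Finset.Nat.antidiagonalTuple n k

/-- `B_{n,k,r}`: sum of multinomial coefficients `(k choose q)` over `q ∈ P(k,n)` whose
first `r` entries are odd and remaining entries are even. -/
def Bnkr (n k r : ℕ) : ℕ :=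
  ∑ q ∈ (Pkn k n).filter
      (fun q => ∀ i : Fin n, ((i : ℕ) < r → Odd (q i)) ∧ (r ≤ (i : ℕ) → Even (q i))),
    Nat.multinomial Finset.univ q

/-! ### Auxiliary scalar calculus lemmas -/

noncomputable def phiCS (a b : ℕ) (z : ℝ) : ℝ := Real.cosh (z/2) ^ a * Real.sinh (z/2) ^ b

noncomputable def psiCS (a b : ℕ) (z : ℝ) : ℝ :=
  (a : ℝ)/2 * phiCS (a-1) (b+1) z + (b : ℝ)/2 * phiCS (a+1) (b-1) z

noncomputable def secondCS (a b : ℕ) : ℝ :=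
  (a : ℝ)/2 * psiCS (a-1) (b+1) 0 + (b : ℝ)/2 * psiCS (a+1) (b-1) 0

lemma hasDerivAt_phiCS (a b : ℕ) (z : ℝ) :
    HasDerivAt (phiCS a b) (psiCS a b z) z := by
  have hhalf : HasDerivAt (fun z : ℝ => z / 2) (1/2) z := by
    simpa using (hasDerivAt_id z).div_const 2
  have hc : HasDerivAt (fun z : ℝ => Real.cosh (z/2)) (Real.sinh (z/2) * (1/2)) z :=
    by have := (Real.hasDerivAt_cosh (z/2)).comp z hhalf; exact this
  have hs : HasDerivAt (fun z : ℝ => Real.sinh (z/2)) (Real.cosh (z/2) * (1/2)) z :=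
    by have := (Real.hasDerivAt_sinh (z/2)).comp z hhalf; exact this
  have := (hc.fun_pow a).fun_mul (hs.fun_pow b)
  refine (show HasDerivAt (phiCS a b) _ z from this).congr_deriv ?_
  simp only [psiCS, phiCS, pow_succ]
  ring

lemma hasDerivAt_psiCS (a b : ℕ) :
    HasDerivAt (psiCS a b) (secondCS a b) 0 := by
  exact ((hasDerivAt_phiCS (a-1) (b+1) 0).const_mul _).add
    ((hasDerivAt_phiCS (a+1) (b-1) 0).const_mul _)

lemma phiCS_zero_succ (x y : ℕ) : phiCS x (y+1) 0 = 0 := by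
  norm_num [phiCS]

lemma phiCS_zero_zero (x : ℕ) : phiCS x 0 0 = 1 := by
  norm_num [phiCS]

lemma secondCS_eq (a b : ℕ) :
    secondCS a b = if b = 0 then (a : ℝ)/4 else if b = 2 then 1/2 else 0 := by
  rcases b with _ | _ | _ | b <;>
    simp [secondCS, psiCS, phiCS_zero_succ, phiCS_zero_zero] <;> push_cast <;> ring

/-! ### Auxiliary list lemmas -/

lemma listSum_map_add {α : Type*} (l : List α) (F G : α → ℝ) :
    (l.map (fun t => F t + G t)).sum = (l.map F).sum + (l.map G).sum := by
  induction l with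
  | nil => simp
  | cons a l ih => simp [ih]; ring

lemma listSum_smul (r : ℝ) (l : List (Matrix (Fin 2) (Fin 2) ℝ)) :
    r • l.sum = (l.map (r • ·)).sum := by
  induction l with
  | nil => simp
  | cons a l ih => simp [smul_add, ih]

lemma listSum_mul_left (a : Matrix (Fin 2) (Fin 2) ℝ) (l : List (Matrix (Fin 2) (Fin 2) ℝ)) :
    a * l.sum = (l.map (a * ·)).sum := by
  induction l with
  | nil => simp
  | cons b l ih => simp [mul_add, ih]

lemma trace_listSum_mul (l : List (Matrix (Fin 2) (Fin 2) ℝ)) (g : Matrix (Fin 2) (Fin 2) ℝ) :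
    Matrix.trace (l.sum * g) = (l.map (fun M => Matrix.trace (M * g))).sum := by
  induction l with
  | nil => simp
  | cons a l ih => simp [add_mul, ih]

lemma prod_expand (c s : ℝ) (lst : List (Matrix (Fin 2) (Fin 2) ℝ)) :
    (lst.map (fun M => c • (1 : Matrix (Fin 2) (Fin 2) ℝ) + s • M)).prod =
      (lst.sublists'.map
        (fun t => (c ^ (lst.length - t.length) * s ^ t.length) • t.prod)).sum := by
  induction lst with
  | nil => simp
  | cons a lst ih =>
    rw [List.map_cons, List.prod_cons, ih, add_mul, smul_mul_assoc, one_mul,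
      smul_mul_assoc, listSum_smul, listSum_mul_left, listSum_smul,
      List.sublists'_cons, List.map_append, List.sum_append, List.map_map, List.map_map]
    simp only [List.map_map]
    congr 1
    · refine congrArg List.sum (List.map_congr_left ?_)
      intro t ht
      have hle : t.length ≤ lst.length := (List.mem_sublists'.mp ht).length_le
      simp only [Function.comp, smul_smul, List.length_cons]
      congr 1
      rw [Nat.succ_sub hle, pow_succ]
      ring
    · refine congrArg List.sum (List.map_congr_left ?_)
      intro t ht
      simp only [Function.comp, smul_smul, List.length_cons, List.prod_cons,
        mul_smul_comm, Nat.succ_sub_succ]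
      congr 1
      rw [pow_succ]
      ring

lemma sum_sublists'_len0 {α : Type*} (h : List α → ℝ) (l : List α) :
    (l.sublists'.map (fun t => if t.length = 0 then h t else 0)).sum = h [] := by
  induction l generalizing h with
  | nil => simp
  | cons a l ih =>
    rw [List.sublists'_cons, List.map_append, List.sum_append, List.map_map]
    have h2 : (List.map ((fun t => if List.length t = 0 then h t else 0) ∘ List.cons a)
        l.sublists').sum = 0 := by
      have : ∀ t ∈ l.sublists',
          ((fun t => if List.length t = 0 then h t else 0) ∘ List.cons a) t = 0 := by
        intro t _; simp
      rw [List.map_congr_left this]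
      simp
    rw [h2, ih h, add_zero]

lemma sum_sublists'_len1 {α : Type*} (h : List α → ℝ) (l : List α) :
    (l.sublists'.map (fun t => if t.length = 1 then h t else 0)).sum =
      (l.map (fun a => h [a])).sum := by
  induction l generalizing h with
  | nil => simp
  | cons a l ih =>
    rw [List.sublists'_cons, List.map_append, List.sum_append, List.map_map, ih h]
    have : (List.map ((fun t => if List.length t = 1 then h t else 0) ∘ List.cons a)
        l.sublists').sum = h [a] := by
      have he : ∀ t ∈ l.sublists',
          ((fun t => if List.length t = 1 then h t else 0) ∘ List.cons a) t =
          (if t.length = 0 then (fun t => h (a :: t)) t else 0) := by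
        intro t _
        have : t.length + 1 = 1 ↔ t.length = 0 := by omega
        simp only [Function.comp, List.length_cons]
        rw [if_congr this rfl rfl]
      rw [List.map_congr_left he, sum_sublists'_len0 (fun t => h (a :: t)) l]
    rw [this, List.map_cons, List.sum_cons]
    ring

def pairSumL {α : Type*} (h : List α → ℝ) : List α → ℝ
  | [] => 0
  | a :: l => (l.map (fun b => h [a, b])).sum + pairSumL h l

lemma sum_sublists'_len2 {α : Type*} (h : List α → ℝ) (l : List α) :
    (l.sublists'.map (fun t => if t.length = 2 then h t else 0)).sum = pairSumL h l := by
  induction l generalizing h with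
  | nil => simp [pairSumL]
  | cons a l ih =>
    rw [List.sublists'_cons, List.map_append, List.sum_append, List.map_map, ih h]
    have : (List.map ((fun t => if List.length t = 2 then h t else 0) ∘ List.cons a)
        l.sublists').sum = (l.map (fun b => h [a, b])).sum := by
      have he : ∀ t ∈ l.sublists',
          ((fun t => if List.length t = 2 then h t else 0) ∘ List.cons a) t =
          (if t.length = 1 then (fun t => h (a :: t)) t else 0) := by
        intro t _
        have : t.length + 1 = 2 ↔ t.length = 1 := by omega
        simp only [Function.comp, List.length_cons]
        rw [if_congr this rfl rfl]
      rw [List.map_congr_left he, sum_sublists'_len1 (fun t => h (a :: t)) l]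
    rw [this, pairSumL]
    ring

lemma pairSumL_ofFn {α : Type*} (h : List α → ℝ) :
    ∀ (n : ℕ) (v : Fin n → α),
      pairSumL h (List.ofFn v) = ∑ i : Fin n, ∑ j ∈ Finset.Ioi i, h [v i, v j] := by
  intro n
  induction n with
  | zero => intro v; simp [pairSumL]
  | succ n ih =>
    intro v
    rw [List.ofFn_succ, pairSumL, ih (fun i => v i.succ), Fin.sum_univ_succ]
    congr 1
    · rw [Fin.sum_Ioi_zero, List.map_ofFn, List.sum_ofFn]
      rfl
    · rw [Finset.sum_congr rfl (fun i _ => (Fin.sum_Ioi_succ (fun j => h [v i.succ, v j]) i).symm)]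

lemma hasDerivAt_listSum {ι : Type*} (L : List ι) (F : ι → ℝ → ℝ) (F' : ι → ℝ) (z : ℝ)
    (h : ∀ p ∈ L, HasDerivAt (F p) (F' p) z) :
    HasDerivAt (fun z => (L.map (fun p => F p z)).sum) ((L.map F').sum) z := by
  induction L with
  | nil => simpa using hasDerivAt_const z (0 : ℝ)
  | cons a L ih =>
    simp only [List.map_cons, List.sum_cons]
    exact (h a (by simp)).add (ih (fun p hp => h p (by simp [hp])))

/-! ### Matrix computations -/

lemma Smat_eq (z : ℝ) :
    Smat z = Real.cosh (z/2) • (1 : Matrix (Fin 2) (Fin 2) ℝ) + Real.sinh (z/2) • Dmat := by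
  ext i j
  fin_cases i <;> fin_cases j <;> simp [Smat, Dmat, Matrix.one_apply]
  rw [← Real.cosh_sub_sinh]; ring

lemma trace_gamma (L : ℝ) :
    Matrix.trace (gammaMat L) = Real.exp (L/2) + Real.exp (-(L/2)) := by
  rw [gammaMat, Matrix.trace_fin_two_of]

lemma pair_trace (li lj θi θj L : ℝ) :
    (1/2 : ℝ) * Matrix.trace (List.prod [Amat li θi, Amat lj θj] * gammaMat L) =
      Real.cos θi * Real.cos θj * Real.cosh (L / 2) +
        Real.sin θi * Real.sin θj * Real.cosh (L / 2 - (lj - li)) := by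
  rw [show List.prod [Amat li θi, Amat lj θj] = Amat li θi * Amat lj θj by simp]
  rw [Amat, Amat, gammaMat, Matrix.mul_fin_two, Matrix.mul_fin_two, Matrix.trace_fin_two_of,
    Real.cosh_eq, Real.cosh_eq]
  simp only [Real.exp_sub, Real.exp_add, Real.exp_neg]
  field_simp
  ring

/-- second derivative of `T` at `0`. -/
theorem iteratedDeriv_two_trace_eq (n : ℕ) (hn : 1 ≤ n) (l θ : Fin n → ℝ) (L : ℝ)
    (f : Fin n → Matrix (Fin 2) (Fin 2) ℝ) (hf : ∀ i, IsUnit (f i))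
    (hA : ∀ i, (f i)⁻¹ * Dmat * f i = Amat (l i) (θ i)) :
    iteratedDeriv 2
      (fun z : ℝ =>
        Matrix.trace
          ((List.ofFn fun i : Fin n => (f i)⁻¹ * Smat z * f i).prod * gammaMat L)) 0 =
    (∑ i : Fin n, ∑ j ∈ Finset.Ioi i,
        (Real.cos (θ i) * Real.cos (θ j) * Real.cosh (L / 2) +
          Real.sin (θ i) * Real.sin (θ j) * Real.cosh (L / 2 - (l j - l i)))) +
      n * Real.cosh (L / 2) / 2 := by
  set v : Fin n → Matrix (Fin 2) (Fin 2) ℝ := fun i => Amat (l i) (θ i) with hv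
  set τ : List (Matrix (Fin 2) (Fin 2) ℝ) → ℝ :=
    fun t => Matrix.trace (t.prod * gammaMat L) with hτ
  set Ls : List (List (Matrix (Fin 2) (Fin 2) ℝ)) := (List.ofFn v).sublists' with hLs
  -- Step 1: rewrite the function
  have hconj : ∀ (z : ℝ) (i : Fin n), (f i)⁻¹ * Smat z * f i =
      Real.cosh (z/2) • (1 : Matrix (Fin 2) (Fin 2) ℝ) + Real.sinh (z/2) • v i := by
    intro z i
    have hdet : IsUnit (f i).det := (Matrix.isUnit_iff_isUnit_det _).mp (hf i)
    rw [Smat_eq, mul_add, add_mul, mul_smul_comm, mul_one, Matrix.smul_mul,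
      Matrix.nonsing_inv_mul _ hdet, mul_smul_comm, Matrix.smul_mul, hA i]
  have hT : (fun z : ℝ =>
        Matrix.trace ((List.ofFn fun i : Fin n => (f i)⁻¹ * Smat z * f i).prod * gammaMat L))
      = fun z => (Ls.map (fun t => phiCS (n - t.length) t.length z * τ t)).sum := by
    funext z
    have h1 : (List.ofFn fun i : Fin n => (f i)⁻¹ * Smat z * f i)
        = (List.ofFn v).map
            (fun M => Real.cosh (z/2) • (1 : Matrix (Fin 2) (Fin 2) ℝ) + Real.sinh (z/2) • M) := by
      rw [List.map_ofFn]
      exact congrArg _ (funext fun i => hconj z i)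
    rw [h1, prod_expand, trace_listSum_mul, List.map_map]
    refine congrArg List.sum (List.map_congr_left fun t ht => ?_)
    simp only [Function.comp]
    rw [Matrix.smul_mul, Matrix.trace_smul, smul_eq_mul, List.length_ofFn]
    rfl
  rw [hT]
  -- Step 2: differentiate twice
  rw [iteratedDeriv_succ, iteratedDeriv_one]
  have hd1 : deriv (fun z => (Ls.map (fun t => phiCS (n - t.length) t.length z * τ t)).sum)
      = fun z => (Ls.map (fun t => psiCS (n - t.length) t.length z * τ t)).sum := by
    funext z
    exact (hasDerivAt_listSum Ls _ _ z
      (fun t _ => (hasDerivAt_phiCS (n - t.length) t.length z).mul_const (τ t))).deriv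
  rw [hd1]
  have hd2 : deriv (fun z => (Ls.map (fun t => psiCS (n - t.length) t.length z * τ t)).sum) 0
      = (Ls.map (fun t => secondCS (n - t.length) t.length * τ t)).sum := by
    refine (hasDerivAt_listSum Ls _ _ 0 (fun t _ => ?_)).deriv
    exact (hasDerivAt_psiCS (n - t.length) t.length).mul_const (τ t)
  rw [hd2]
  -- Step 3: evaluate the sum
  have hptwise : ∀ t ∈ Ls,
      secondCS (n - t.length) t.length * τ t
      = (if t.length = 0 then ((n : ℝ)/4) * τ t else 0)
        + (if t.length = 2 then (1/2 : ℝ) * τ t else 0) := by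
    intro t _
    rw [secondCS_eq (n - t.length) t.length]
    rcases ht : t.length with _ | _ | _ | m <;> simp [ht]
  rw [List.map_congr_left hptwise, listSum_map_add]
  have e0 : (Ls.map (fun t => if t.length = 0 then ((n : ℝ)/4) * τ t else 0)).sum
      = ((n : ℝ)/4) * τ [] := sum_sublists'_len0 (fun t => ((n : ℝ)/4) * τ t) _
  have e2 : (Ls.map (fun t => if t.length = 2 then (1/2 : ℝ) * τ t else 0)).sum
      = pairSumL (fun t => (1/2 : ℝ) * τ t) (List.ofFn v) :=
    sum_sublists'_len2 (fun t => (1/2 : ℝ) * τ t) _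
  rw [e0, e2, pairSumL_ofFn (fun t => (1/2 : ℝ) * τ t) n v]
  have hτnil : τ [] = Real.exp (L/2) + Real.exp (-(L/2)) := by
    simp only [hτ, List.prod_nil, one_mul]
    exact trace_gamma L
  rw [hτnil]
  have hpair : ∀ i j : Fin n, (1/2 : ℝ) * τ [v i, v j]
      = Real.cos (θ i) * Real.cos (θ j) * Real.cosh (L / 2) +
          Real.sin (θ i) * Real.sin (θ j) * Real.cosh (L / 2 - (l j - l i)) := by
    intro i j
    exact pair_trace (l i) (l j) (θ i) (θ j) L
  rw [Finset.sum_congr rfl (fun i _ => Finset.sum_congr rfl (fun j _ => hpair i j))]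
  rw [Real.cosh_eq]
  ring
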